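/- If β ∈ (1, (1+√5)/2), then the number 1 has at least two distinct expansions of the form 1 = Σ_{k≥1} u_k β^{-k} with digits u_k ∈ {0,1}. -/

import Mathlib

noncomputable def gSt (β a : ℝ) : ℕ → ℝ
  | 0 => a
  | n+1 => β * gSt β a n - (if 1/β ≤ gSt β a n then 1 else 0)

noncomputable def gDig (β a : ℝ) (n : ℕ) : ℝ := if 1/β ≤ gSt β a n then 1 else 0

lemma gDig_mem (β a : ℝ) (n : ℕ) : gDig β a n = 0 ∨ gDig β a n = 1 := by
  unfold gDig; split <;> simp

lemma gSt_succ (β a : ℝ) (n : ℕ) :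
    gSt β a (n+1) = β * gSt β a n - gDig β a n := rfl

lemma gSt_mem (β : ℝ) (hβ1 : 1 < β) (hβ2 : β ≤ 2) (a : ℝ) (h0 : 0 ≤ a)
    (h1 : a ≤ 1/(β-1)) : ∀ n, 0 ≤ gSt β a n ∧ gSt β a n ≤ 1/(β-1) := by
  have hb0 : (0:ℝ) < β := by linarith
  have hb1 : (0:ℝ) < β - 1 := by linarith
  have hM : (1/(β-1)) * (β-1) = 1 := by field_simp
  intro n; induction n with
  | zero => exact ⟨h0, h1⟩
  | succ n ih =>
    rw [gSt_succ]
    unfold gDig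
    by_cases h : 1/β ≤ gSt β a n
    · rw [if_pos h]
      have h' : 1 ≤ β * gSt β a n := by
        have := mul_le_mul_of_nonneg_left h hb0.le
        rwa [mul_one_div, div_self hb0.ne'] at this
      constructor
      · linarith
      · nlinarith [ih.2]
    · rw [if_neg h]
      push_neg at h
      have h' : β * gSt β a n < 1 := by
        have := mul_lt_mul_of_pos_left h hb0
        rwa [mul_one_div, div_self hb0.ne'] at this
      constructor
      · nlinarith [ih.1]
      · nlinarith

lemma gSum (β a : ℝ) (hβ : 0 < β) (n : ℕ) :
    a = (∑ k ∈ Finset.range n, gDig β a k / β^(k+1)) + gSt β a n / β^n := by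
  induction n with
  | zero => simp [gSt]
  | succ n ih =>
    have hpow : β ^ n ≠ 0 := pow_ne_zero _ hβ.ne'
    have key : gSt β a (n+1)/β^(n+1) = gSt β a n/β^n - gDig β a n/β^(n+1) := by
      rw [gSt_succ]
      field_simp
      ring
    rw [Finset.sum_range_succ, key]
    linarith [ih]

lemma greedy_hasSum (β : ℝ) (hβ1 : 1 < β) (hβ2 : β ≤ 2) (a : ℝ) (h0 : 0 ≤ a)
    (h1 : a ≤ 1/(β-1)) : HasSum (fun k => gDig β a k / β^(k+1)) a := by
  have hb0 : (0:ℝ) < β := by linarith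
  have hinv : (1:ℝ)/β < 1 := by rw [div_lt_one hb0]; linarith
  have hinv0 : (0:ℝ) ≤ 1/β := by positivity
  have hmem := gSt_mem β hβ1 hβ2 a h0 h1
  have hnonneg : ∀ k, 0 ≤ gDig β a k / β^(k+1) := by
    intro k
    rcases gDig_mem β a k with h | h <;> rw [h] <;> positivity
  have hgeo : Summable (fun k : ℕ => (1/β)^(k+1)) :=
    ((summable_geometric_of_lt_one hinv0 hinv).mul_left (1/β)).congr
      (fun n => (pow_succ' _ _).symm)
  have hle : ∀ k, gDig β a k / β^(k+1) ≤ (1/β)^(k+1) := by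
    intro k
    rw [div_pow, one_pow]
    have hd1 : gDig β a k ≤ 1 := by
      rcases gDig_mem β a k with h | h <;> rw [h] <;> norm_num
    gcongr
  have hsummable : Summable (fun k => gDig β a k / β^(k+1)) :=
    Summable.of_nonneg_of_le hnonneg hle hgeo
  rw [hsummable.hasSum_iff_tendsto_nat]
  have key : ∀ n, ∑ k ∈ Finset.range n, gDig β a k / β^(k+1)
      = a - gSt β a n / β^n := by
    intro n
    have := gSum β a hb0 n
    linarith
  simp_rw [key]
  have htend : Filter.Tendsto (fun n => gSt β a n / β^n) Filter.atTop (nhds 0) := by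
    apply squeeze_zero (fun n => div_nonneg (hmem n).1 (by positivity))
      (g := fun n => (1/(β-1)) * (1/β)^n)
    · intro n
      rw [div_eq_mul_inv, one_div, ← inv_pow]
      have := (hmem n).2
      have : gSt β a n * (β⁻¹)^n ≤ (1/(β-1)) * (β⁻¹)^n := by
        apply mul_le_mul_of_nonneg_right (hmem n).2 (by positivity)
      simpa using this
    · have := tendsto_pow_atTop_nhds_zero_of_lt_one hinv0 hinv
      simpa using this.const_mul (1/(β-1))
  have := Filter.Tendsto.const_sub a htend
  simpa using this

/-- If β ∈ (1, (1+√5)/2), then 1 has at least two distinct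
expansions 1 = Σ_{k≥1} u_k β^{-k} with digits u_k ∈ {0,1}. -/
theorem stmt_0 (β : ℝ) (hβ1 : 1 < β) (hβ2 : β < (1 + Real.sqrt 5) / 2) :
    ∃ u v : ℕ → ℝ, (∀ k, u k = 0 ∨ u k = 1) ∧ (∀ k, v k = 0 ∨ v k = 1) ∧ u ≠ v ∧
      (1 : ℝ) = ∑' k : ℕ, u k / β ^ (k + 1) ∧ (1 : ℝ) = ∑' k : ℕ, v k / β ^ (k + 1) := by
  have hsq : Real.sqrt 5 < 3 := by
    nlinarith [Real.sq_sqrt (by norm_num : (5:ℝ) ≥ 0), Real.sqrt_nonneg 5]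
  have hβlt2 : β < 2 := by linarith
  have hb0 : (0:ℝ) < β := by linarith
  have hb1 : (0:ℝ) < β - 1 := by linarith
  have hgold : β^2 < β + 1 := by
    nlinarith [Real.sq_sqrt (by norm_num : (5:ℝ) ≥ 0), Real.sqrt_nonneg 5]
  -- expansion from a = β - 1 with first digit 1
  have hu : HasSum (fun k => gDig β (β-1) k / β^(k+1)) (β-1) := by
    apply greedy_hasSum β hβ1 hβlt2.le _ (by linarith)
    rw [le_div_iff₀ hb1]; nlinarith
  -- expansion from a = β with first digit 0
  have hv : HasSum (fun k => gDig β β k / β^(k+1)) β := by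
    apply greedy_hasSum β hβ1 hβlt2.le _ hb0.le
    rw [le_div_iff₀ hb1]; nlinarith
  set u : ℕ → ℝ := fun k => Nat.rec 1 (fun n _ => gDig β (β-1) n) k with hu_def
  set v : ℕ → ℝ := fun k => Nat.rec 0 (fun n _ => gDig β β n) k with hv_def
  refine ⟨u, v, ?_, ?_, ?_, ?_, ?_⟩
  · intro k; cases k with
    | zero => right; rfl
    | succ n => exact gDig_mem β (β-1) n
  · intro k; cases k with
    | zero => left; rfl
    | succ n => exact gDig_mem β β n
  · intro h
    have h0 : u 0 = v 0 := by rw [h]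
    simp [hu_def, hv_def] at h0
  · have hshift : HasSum (fun n => u (n+1) / β^(n+1+1)) ((β-1)/β) := by
      have : HasSum (fun k => (gDig β (β-1) k / β^(k+1)) / β) ((β-1)/β) := hu.div_const β
      convert this using 2 with n
      rw [div_div, ← pow_succ]
    rw [hasSum_nat_add_iff (f := fun k => u k / β^(k+1)) 1] at hshift
    have : HasSum (fun k => u k / β^(k+1)) 1 := by
      convert hshift using 1
      · rfl
      simp [hu_def]
      field_simp
      ring
    exact this.tsum_eq.symm
  · have hshift : HasSum (fun n => v (n+1) / β^(n+1+1)) (β/β) := by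
      have : HasSum (fun k => (gDig β β k / β^(k+1)) / β) (β/β) := hv.div_const β
      convert this using 2 with n
      rw [div_div, ← pow_succ]
    rw [hasSum_nat_add_iff (f := fun k => v k / β^(k+1)) 1] at hshift
    have : HasSum (fun k => v k / β^(k+1)) 1 := by
      convert hshift using 1
      · rfl
      simp [hv_def]
      field_simp
    exact this.tsum_eq.symm
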